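/- Let G be a finite connected weighted graph with edges e₁,…,e_m. The orthogonal projection π: C_1(G,ℝ) → H_1(G,ℝ) with respect to the inner product ⟨α,β⟩ = Σ α(e)β(e)ℓ(e) satisfies π(e_i) = Σ_j a_{ij} e_j where a_{ij} = (1/w(G)) Σ_T α_{T,e_i}(e_j) w(T), the sum being over all spanning trees T of G. -/

import Mathlib

/-- A finite weighted (multi)graph with a fixed orientation of the edges:
vertex type `V`, edge type `E`, tail/head maps and a positive length function. -/
structure WGraph where
  V : Type
  E : Type
  [fV : Fintype V]
  [fE : Fintype E]
  [dV : DecidableEq V]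
  [dE : DecidableEq E]
  tail : E → V
  head : E → V
  len : E → ℝ
  len_pos : ∀ e, 0 < len e

attribute [instance] WGraph.fV WGraph.fE WGraph.dV WGraph.dE

namespace WGraph

variable (G : WGraph)

/-- Two vertices are adjacent if some edge joins them (in either direction). -/
def Adj (x y : G.V) : Prop :=
  ∃ e, (G.tail e = x ∧ G.head e = y) ∨ (G.tail e = y ∧ G.head e = x)

/-- A weighted graph is connected if any two vertices are joined by a walk. -/
def Connected : Prop := ∀ x y : G.V, Relation.ReflTransGen G.Adj x y

/-- The differential `d : C_0(G,ℝ) → C_1(G,ℝ)`, `(df)(e) = (f(e⁺) - f(e⁻))/ℓ(e)`. -/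
noncomputable def d (f : G.V → ℝ) : G.E → ℝ :=
  fun e => (f (G.head e) - f (G.tail e)) / G.len e

/-- The adjoint `d* : C_1(G,ℝ) → C_0(G,ℝ)`,
`(d*α)(x) = Σ_{e⁺ = x} α(e) - Σ_{e⁻ = x} α(e)`. -/
def dStar (α : G.E → ℝ) : G.V → ℝ := fun x =>
  (∑ e ∈ Finset.univ.filter fun e => G.head e = x, α e) -
    ∑ e ∈ Finset.univ.filter fun e => G.tail e = x, α e

/-- The inner product `⟨α,β⟩ = Σ_e α(e) β(e) ℓ(e)` on real 1-chains. -/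
noncomputable def ip (α β : G.E → ℝ) : ℝ := ∑ e, α e * β e * G.len e

/-- Real 1-cycles: the kernel of `d*`. -/
def IsCycle (α : G.E → ℝ) : Prop := ∀ x, G.dStar α x = 0

/-- Exact 1-chains: the image of `d`. -/
def IsExact (α : G.E → ℝ) : Prop := ∃ f : G.V → ℝ, α = G.d f

/-- A 1-form `ω = Σ ω_e de` (recorded by its coefficients) is harmonic if at every
vertex the incoming and outgoing coefficients sum to the same value. -/
def Harmonic (ω : G.E → ℝ) : Prop :=
  ∀ x, (∑ e ∈ Finset.univ.filter fun e => G.head e = x, ω e) =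
    ∑ e ∈ Finset.univ.filter fun e => G.tail e = x, ω e

/-- Integration of the 1-form `ω` along the 1-chain `α`: `∫_α ω = Σ_e ω_e α(e) ℓ(e)`. -/
noncomputable def intPair (ω α : G.E → ℝ) : ℝ := ∑ e, ω e * α e * G.len e

/-- `d*` on integral 1-chains. -/
def dStarZ (α : G.E → ℤ) : G.V → ℤ := fun x =>
  (∑ e ∈ Finset.univ.filter fun e => G.head e = x, α e) -
    ∑ e ∈ Finset.univ.filter fun e => G.tail e = x, α e

/-- Integral 1-cycles. -/
def IsCycleZ (α : G.E → ℤ) : Prop := ∀ x, G.dStarZ α x = 0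

/-- `α ∈ im(d)_ℤ`: `α` is an integral 1-chain which is the differential of a real
function on the vertices (a function with integer slopes). -/
def IsExactZ (α : G.E → ℤ) : Prop :=
  ∃ f : G.V → ℝ, ∀ e, (α e : ℝ) = G.d f e

/-- The subgroup `H_1(G,ℤ) ⊕ im(d)_ℤ` of `C_1(G,ℤ)`, i.e. the subgroup generated by
integral cycles together with integral exact chains. -/
def jacRel : AddSubgroup (G.E → ℤ) :=
  AddSubgroup.closure {α | G.IsCycleZ α ∨ G.IsExactZ α}

/-- The Jacobian group of a weighted graph: `J(G) = C_1(G,ℤ)/(H_1(G,ℤ) ⊕ im(d)_ℤ)`. -/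
def Jac := (G.E → ℤ) ⧸ G.jacRel

noncomputable instance : AddCommGroup G.Jac :=
  inferInstanceAs (AddCommGroup ((G.E → ℤ) ⧸ G.jacRel))

/-- Divisors of degree zero. -/
def Div0 : AddSubgroup (G.V → ℤ) where
  carrier := {D | ∑ x, D x = 0}
  add_mem' := by
    intro a b ha hb
    simp only [Set.mem_setOf_eq] at *
    simp [Finset.sum_add_distrib, ha, hb]
  zero_mem' := by simp
  neg_mem' := by
    intro a ha
    simp only [Set.mem_setOf_eq] at *
    simp [ha]

/-- `d*` as a group homomorphism on integral 1-chains. -/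
def dStarZHom : (G.E → ℤ) →+ (G.V → ℤ) where
  toFun := G.dStarZ
  map_zero' := by funext x; simp [dStarZ]
  map_add' := by
    intro a b
    funext x
    simp [dStarZ, Finset.sum_add_distrib]
    ring

/-- The subgroup `im(d)_ℤ` of `C_1(G,ℤ)`. -/
def imdZ : AddSubgroup (G.E → ℤ) where
  carrier := {α | G.IsExactZ α}
  add_mem' := by
    rintro a b ⟨f, hf⟩ ⟨g, hg⟩
    exact ⟨f + g, fun e => by
      simp only [Pi.add_apply, Int.cast_add, hf e, hg e, d]; ring⟩
  zero_mem' := ⟨0, fun e => by simp [d]⟩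
  neg_mem' := by
    rintro a ⟨f, hf⟩
    exact ⟨-f, fun e => by
      simp only [Pi.neg_apply, Int.cast_neg, hf e, d]; ring⟩

/-- Principal divisors: `Prin(G) = d*(im(d)_ℤ)`. -/
def Prin : AddSubgroup (G.V → ℤ) := G.imdZ.map G.dStarZHom

lemma sum_dStarZ (α : G.E → ℤ) : ∑ x, G.dStarZ α x = 0 := by
  simp only [dStarZ, Finset.sum_sub_distrib]
  rw [Finset.sum_fiberwise, Finset.sum_fiberwise]
  simp

/-- The degree-zero Picard group `Pic(G) = Div⁰(G)/Prin(G)`. -/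
def PicZ := G.Div0 ⧸ (G.Prin.addSubgroupOf G.Div0)

noncomputable instance : AddCommGroup G.PicZ :=
  inferInstanceAs (AddCommGroup (G.Div0 ⧸ (G.Prin.addSubgroupOf G.Div0)))

/-- The weighted graph obtained by deleting the edge `e₀`. -/
def delEdge (e₀ : G.E) : WGraph where
  V := G.V
  E := {e : G.E // e ≠ e₀}
  tail := fun e => G.tail e.1
  head := fun e => G.head e.1
  len := fun e => G.len e.1
  len_pos := fun e => G.len_pos e.1

/-- An edge is a bridge if deleting it disconnects the graph. -/
def IsBridge (e₀ : G.E) : Prop := ¬ (G.delEdge e₀).Connected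

/-- The weighted graph obtained by deleting a vertex `z` (and all incident edges). -/
def delVertex (z : G.V) : WGraph where
  V := {x : G.V // x ≠ z}
  E := {e : G.E // G.tail e ≠ z ∧ G.head e ≠ z}
  tail := fun e => ⟨G.tail e.1, e.2.1⟩
  head := fun e => ⟨G.head e.1, e.2.2⟩
  len := fun e => G.len e.1
  len_pos := fun e => G.len_pos e.1

open scoped Classical in
/-- The (discrete) potential kernel: `jKer z y` is the function `f` with `f(z) = 0`
and `Δf = δ_y - δ_z` (when such a function exists; it is unique on a
connected graph). -/
noncomputable def jKer (z y : G.V) : G.V → ℝ :=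
  if h : ∃ f : G.V → ℝ, f z = 0 ∧ ∀ w, G.dStar (G.d f) w =
      (if w = y then 1 else 0) - (if w = z then 1 else 0)
  then h.choose else 0

/-- Connectivity using only the edges in `S`. -/
def ConnectedOn (S : Finset G.E) : Prop :=
  ∀ x y : G.V, Relation.ReflTransGen
    (fun a b => ∃ e ∈ S, (G.tail e = a ∧ G.head e = b) ∨ (G.tail e = b ∧ G.head e = a)) x y

/-- A spanning tree: a spanning connected edge set with `#V - 1` edges. -/
def IsSpanningTree (T : Finset G.E) : Prop :=
  G.ConnectedOn T ∧ T.card + 1 = Fintype.card G.V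

/-- The weight `w(T) = Π_{e ∉ T} ℓ(e)` of a spanning tree. -/
noncomputable def wt (T : Finset G.E) : ℝ := ∏ e ∈ Finset.univ \ T, G.len e

open scoped Classical in
/-- `w(G) = Σ_T w(T)`, summed over all spanning trees. -/
noncomputable def wG : ℝ := ∑ T : Finset G.E, if G.IsSpanningTree T then G.wt T else 0

open scoped Classical in
/-- The Foster coefficient `F(e) = (1/w(G)) Σ_{T : e ∉ T} w(T)`. -/
noncomputable def foster (e : G.E) : ℝ :=
  (1 / G.wG) * ∑ T : Finset G.E, if G.IsSpanningTree T ∧ e ∉ T then G.wt T else 0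

open scoped Classical in
/-- The fundamental cycle `α_{T,e}`: the unique 1-cycle supported on `T ∪ {e}` taking
the value `1` on `e`; by convention it is `0` when no such cycle exists
(e.g. when `e ∈ T`). -/
noncomputable def fundCycle (T : Finset G.E) (e : G.E) : G.E → ℝ :=
  if h : ∃ α : G.E → ℝ, G.IsCycle α ∧ α e = 1 ∧ ∀ f, f ∉ T → f ≠ e → α f = 0
  then h.choose else 0

section AuxProof
open Finset
open scoped Classical

variable {G}

/-- One-step adjacency using only edges of `S`. -/
def srel (S : Finset G.E) (a b : G.V) : Prop :=
  ∃ e ∈ S, (G.tail e = a ∧ G.head e = b) ∨ (G.tail e = b ∧ G.head e = a)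

/-- Connectivity relation generated by the edges of `S`. -/
def conn (S : Finset G.E) : G.V → G.V → Prop := Relation.ReflTransGen (G.srel S)

lemma srel_symm {S : Finset G.E} {a b : G.V} (h : G.srel S a b) : G.srel S b a := by
  obtain ⟨e, he, h | h⟩ := h
  · exact ⟨e, he, Or.inr h⟩
  · exact ⟨e, he, Or.inl h⟩

lemma conn_symm {S : Finset G.E} {a b : G.V} (h : G.conn S a b) : G.conn S b a := by
  induction h with
  | refl => exact .refl
  | tail _ h2 ih => exact Relation.ReflTransGen.trans (Relation.ReflTransGen.single (srel_symm h2)) ih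

lemma conn_mono {S S' : Finset G.E} (hss : S ⊆ S') {a b : G.V} (h : G.conn S a b) :
    G.conn S' a b := by
  induction h with
  | refl => exact .refl
  | tail _ h2 ih => exact ih.tail (by obtain ⟨e, he, h⟩ := h2; exact ⟨e, hss he, h⟩)

lemma connectedOn_iff {S : Finset G.E} : G.ConnectedOn S ↔ ∀ x y, G.conn S x y := Iff.rfl

/-- The setoid of `S`-connectivity. -/
def connSetoid (S : Finset G.E) : Setoid G.V :=
  ⟨G.conn S, ⟨fun _ => .refl, conn_symm, Relation.ReflTransGen.trans⟩⟩

/-- Number of `S`-connected components. -/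
noncomputable def ncomp (G : WGraph) (S : Finset G.E) : ℕ :=
  Nat.card (Quotient (connSetoid (G := G) S))

lemma conn_empty {a b : G.V} (h : G.conn (∅ : Finset G.E) a b) : a = b := by
  induction h with
  | refl => rfl
  | tail _ h2 ih => obtain ⟨e, he, _⟩ := h2; exact absurd he (Finset.notMem_empty e)

lemma ncomp_empty : ncomp G (∅ : Finset G.E) = Nat.card G.V := by
  refine (Nat.card_eq_of_bijective (Quotient.mk _) ⟨?_, fun q => Quotient.exists_rep q⟩).symm
  intro a b hab
  exact conn_empty (Quotient.eq''.mp hab)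

end AuxProof
lemma conn_erase_cases {S : Finset G.E} {e : G.E} {x y : G.V} (h : G.conn S x y) :
    G.conn (S.erase e) x y ∨
      (G.conn (S.erase e) x (G.tail e) ∧ G.conn (S.erase e) (G.head e) y) ∨
      (G.conn (S.erase e) x (G.head e) ∧ G.conn (S.erase e) (G.tail e) y) := by
  induction h with
  | refl => exact Or.inl .refl
  | @tail b c _ h2 ih =>
    obtain ⟨f, hf, hor⟩ := h2
    by_cases hfe : f = e
    · subst hfe
      rcases hor with ⟨ht, hh⟩ | ⟨ht, hh⟩
      · -- tail e = b, head e = c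
        rcases ih with h | ⟨h1, h2'⟩ | ⟨h1, h2'⟩
        · exact Or.inr (Or.inl ⟨by rw [ht]; exact h, by rw [hh]; exact .refl⟩)
        · exact Or.inr (Or.inl ⟨h1, by rw [hh]; exact .refl⟩)
        · exact Or.inl (by rw [← hh]; exact h1)
      · -- tail e = c, head e = b
        rcases ih with h | ⟨h1, h2'⟩ | ⟨h1, h2'⟩
        · exact Or.inr (Or.inr ⟨by rw [hh]; exact h, by rw [ht]; exact .refl⟩)
        · exact Or.inl (by rw [← ht]; exact h1)
        · exact Or.inl (by rw [← ht]; exact h1.trans (conn_symm (by rw [hh]; exact h2')))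
    · have hstep : G.srel (S.erase e) b c := ⟨f, Finset.mem_erase.mpr ⟨hfe, hf⟩, hor⟩
      rcases ih with h | ⟨h1, h2'⟩ | ⟨h1, h2'⟩
      · exact Or.inl (h.tail hstep)
      · exact Or.inr (Or.inl ⟨h1, h2'.tail hstep⟩)
      · exact Or.inr (Or.inr ⟨h1, h2'.tail hstep⟩)

/-- The natural surjection between component quotients. -/
noncomputable def qmap {S S' : Finset G.E} (h : S' ⊆ S) :
    Quotient (connSetoid (G := G) S') → Quotient (connSetoid (G := G) S) :=
  Quotient.map id (fun _ _ hab => conn_mono h hab)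

lemma qmap_surj {S S' : Finset G.E} (h : S' ⊆ S) :
    Function.Surjective (qmap (G := G) h) := by
  intro q
  obtain ⟨a, rfl⟩ := Quotient.exists_rep q
  exact ⟨Quotient.mk _ a, rfl⟩

lemma ncomp_erase_le (S : Finset G.E) (e : G.E) : ncomp G (S.erase e) ≤ ncomp G S + 1 := by
  classical
  have hsub : S.erase e ⊆ S := Finset.erase_subset e S
  have hinj : Function.Injective (fun q => if q = Quotient.mk (connSetoid (G := G) (S.erase e)) (G.tail e)
      then (none : Option (Quotient (connSetoid (G := G) S))) else some (qmap (G := G) hsub q)) := by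
    intro q1 q2 h
    simp only [] at h
    by_cases h1 : q1 = Quotient.mk (connSetoid (G := G) (S.erase e)) (G.tail e) <;>
      by_cases h2 : q2 = Quotient.mk (connSetoid (G := G) (S.erase e)) (G.tail e)
    · rw [h1, h2]
    · rw [if_pos h1, if_neg h2] at h; exact absurd h.symm (Option.some_ne_none _)
    · rw [if_neg h1, if_pos h2] at h; exact absurd h (Option.some_ne_none _)
    · rw [if_neg h1, if_neg h2] at h
      obtain ⟨a, rfl⟩ := Quotient.exists_rep q1
      obtain ⟨b, rfl⟩ := Quotient.exists_rep q2
      have hab : G.conn S a b := Quotient.exact (Option.some_injective _ h)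
      rcases conn_erase_cases (G := G) (e := e) hab with hc | ⟨hc1, _⟩ | ⟨_, hc2⟩
      · exact Quotient.sound hc
      · exact absurd (Quotient.sound hc1) h1
      · exact absurd (Quotient.sound (conn_symm hc2)) h2
  calc ncomp G (S.erase e) ≤ Nat.card (Option (Quotient (connSetoid (G := G) S))) :=
        Nat.card_le_card_of_injective _ hinj
    _ = ncomp G S + 1 := Finite.card_option

lemma ncomp_lt {S : Finset G.E} {e : G.E} (he : e ∈ S)
    (hnc : ¬ G.conn (S.erase e) (G.tail e) (G.head e)) :
    ncomp G S + 1 ≤ ncomp G (S.erase e) := by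
  by_contra hcon
  push_neg at hcon
  have hle : Nat.card (Quotient (connSetoid (G := G) (S.erase e))) ≤
      Nat.card (Quotient (connSetoid (G := G) S)) := by
    unfold ncomp at hcon; omega
  have hbij := (qmap_surj (G := G) (Finset.erase_subset e S)).bijective_of_nat_card_le hle
  have : Quotient.mk (connSetoid (G := G) (S.erase e)) (G.tail e) =
      Quotient.mk (connSetoid (G := G) (S.erase e)) (G.head e) := by
    apply hbij.injective
    exact Quotient.sound (Relation.ReflTransGen.single ⟨e, he, Or.inl ⟨rfl, rfl⟩⟩)
  exact hnc (Quotient.exact this)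

lemma ncomp_le_one {S : Finset G.E} (h : G.ConnectedOn S) : ncomp G S ≤ 1 := by
  have : Subsingleton (Quotient (connSetoid (G := G) S)) := by
    constructor
    intro q1 q2
    obtain ⟨a, rfl⟩ := Quotient.exists_rep q1
    obtain ⟨b, rfl⟩ := Quotient.exists_rep q2
    exact Quotient.sound (h a b)
  exact Finite.card_le_one_iff_subsingleton.mpr this

lemma card_le_ncomp_add (S : Finset G.E) :
    Fintype.card G.V ≤ ncomp G S + S.card := by
  induction S using Finset.induction_on with
  | empty => simp [ncomp_empty, Nat.card_eq_fintype_card]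
  | @insert e S he ih =>
    have h1 : ncomp G S ≤ ncomp G (insert e S) + 1 := by
      simpa [Finset.erase_insert he] using ncomp_erase_le (G := G) (insert e S) e
    have h2 : (insert e S).card = S.card + 1 := Finset.card_insert_of_notMem he
    omega

lemma card_le_of_connectedOn {S : Finset G.E} (h : G.ConnectedOn S) :
    Fintype.card G.V ≤ S.card + 1 := by
  have := card_le_ncomp_add (G := G) S
  have := ncomp_le_one (G := G) h
  omega

lemma forest_ncomp (S : Finset G.E)
    (hf : ∀ e ∈ S, ¬ G.conn (S.erase e) (G.tail e) (G.head e)) :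
    ncomp G S + S.card = Fintype.card G.V := by
  induction S using Finset.induction_on with
  | empty => simp [ncomp_empty, Nat.card_eq_fintype_card]
  | @insert e S he ih =>
    have h1 : ncomp G S ≤ ncomp G (insert e S) + 1 := by
      simpa [Finset.erase_insert he] using ncomp_erase_le (G := G) (insert e S) e
    have h2 : ncomp G (insert e S) + 1 ≤ ncomp G S := by
      have := ncomp_lt (G := G) (S := insert e S) (e := e) (Finset.mem_insert_self e S)
        (by simpa [Finset.erase_insert he] using hf e (Finset.mem_insert_self e S))
      simpa [Finset.erase_insert he] using this
    have hS : ∀ f ∈ S, ¬ G.conn (S.erase f) (G.tail f) (G.head f) := by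
      intro f hfS hcon
      exact hf f (Finset.mem_insert_of_mem hfS)
        (conn_mono (Finset.erase_subset_erase f (Finset.subset_insert e S)) hcon)
    have h3 := ih hS
    have h4 : (insert e S).card = S.card + 1 := Finset.card_insert_of_notMem he
    omega

lemma conn_replace {T T' : Finset G.E} {j : G.E}
    (hj : G.conn T' (G.tail j) (G.head j)) (hsub : T.erase j ⊆ T')
    {x y : G.V} (h : G.conn T x y) : G.conn T' x y := by
  induction h with
  | refl => exact .refl
  | @tail b c _ h2 ih =>
    obtain ⟨f, hf, hor⟩ := h2
    by_cases hfj : f = j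
    · subst hfj
      rcases hor with ⟨h1, h2'⟩ | ⟨h1, h2'⟩
      · refine ih.trans ?_
        have := hj; rwa [h1, h2'] at this
      · refine ih.trans ?_
        have := conn_symm hj; rwa [h1, h2'] at this
    · exact ih.tail ⟨f, hsub (Finset.mem_erase.mpr ⟨hfj, hf⟩), hor⟩

lemma exists_spanning_tree_aux [Nonempty G.V] :
    ∀ S : Finset G.E, G.ConnectedOn S → ∃ T ⊆ S, G.IsSpanningTree T := by
  intro S
  induction S using Finset.strongInductionOn with
  | _ S ih =>
    intro hS
    by_cases hred : ∃ e ∈ S, G.conn (S.erase e) (G.tail e) (G.head e)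
    · obtain ⟨e, he, hce⟩ := hred
      have hconn' : G.ConnectedOn (S.erase e) := fun x y =>
        conn_replace (G := G) hce (le_refl _) (hS x y)
      obtain ⟨T, hT1, hT2⟩ := ih (S.erase e) (Finset.erase_ssubset he) hconn'
      exact ⟨T, hT1.trans (Finset.erase_subset e S), hT2⟩
    · push_neg at hred
      have h1 := forest_ncomp (G := G) S hred
      have h2 := ncomp_le_one (G := G) hS
      have h3 : 1 ≤ ncomp G S := by
        have hne : Nonempty (Quotient (connSetoid (G := G) S)) :=
          ⟨Quotient.mk _ (Classical.arbitrary G.V)⟩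
        exact Nat.card_pos
      exact ⟨S, le_refl _, hS, by omega⟩

lemma exists_spanning_tree [Nonempty G.V] (hG : G.Connected) :
    ∃ T : Finset G.E, G.IsSpanningTree T := by
  obtain ⟨T, _, hT⟩ := exists_spanning_tree_aux (G := G) Finset.univ
    (fun x y => conn_mono (by intro z _; exact Finset.mem_univ z)
      (by have := hG x y
          induction this with
          | refl => exact .refl
          | tail _ h2 ih => exact ih.tail (by obtain ⟨e, h⟩ := h2; exact ⟨e, Finset.mem_univ e, h⟩)))
  exact ⟨T, hT⟩
attribute [local instance] Classical.propDecidable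

lemma dStar_add (α β : G.E → ℝ) (x : G.V) :
    G.dStar (fun e => α e + β e) x = G.dStar α x + G.dStar β x := by
  unfold dStar; rw [Finset.sum_add_distrib, Finset.sum_add_distrib]; ring

lemma dStar_sub (α β : G.E → ℝ) (x : G.V) :
    G.dStar (fun e => α e - β e) x = G.dStar α x - G.dStar β x := by
  unfold dStar; rw [Finset.sum_sub_distrib, Finset.sum_sub_distrib]; ring

lemma dStar_mul (c : ℝ) (α : G.E → ℝ) (x : G.V) :
    G.dStar (fun e => c * α e) x = c * G.dStar α x := by
  unfold dStar; rw [← Finset.mul_sum, ← Finset.mul_sum]; ring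

lemma dStar_fsum {ι : Type*} (s : Finset ι) (F : ι → G.E → ℝ) (x : G.V) :
    G.dStar (fun e => ∑ t ∈ s, F t e) x = ∑ t ∈ s, G.dStar (F t) x := by
  unfold dStar
  rw [Finset.sum_comm, Finset.sum_comm (s := Finset.univ.filter fun e => G.tail e = x),
    Finset.sum_sub_distrib]

lemma dStar_delta (e : G.E) (x : G.V) :
    G.dStar (fun f => if f = e then (1 : ℝ) else 0) x =
      (if G.head e = x then (1 : ℝ) else 0) - (if G.tail e = x then 1 else 0) := by
  unfold dStar
  rw [Finset.sum_ite_eq' (Finset.univ.filter fun f => G.head f = x) e (fun _ => (1:ℝ)),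
    Finset.sum_ite_eq' (Finset.univ.filter fun f => G.tail f = x) e (fun _ => (1:ℝ))]
  simp

lemma exists_chain {S : Finset G.E} {x y : G.V} (h : G.conn S x y) :
    ∃ c : G.E → ℝ, (∀ f, f ∉ S → c f = 0) ∧
      ∀ v, G.dStar c v = (if y = v then (1 : ℝ) else 0) - (if x = v then 1 else 0) := by
  induction h with
  | refl => exact ⟨fun _ => 0, fun f _ => rfl, fun v => by unfold dStar; simp⟩
  | @tail b c _ hstep ih =>
    obtain ⟨ch, hsupp, hd⟩ := ih
    obtain ⟨e, heS, hor⟩ := hstep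
    have hes : ∀ f, f ∉ S → f ≠ e := fun f hf hfe => hf (hfe ▸ heS)
    rcases hor with ⟨ht, hh⟩ | ⟨ht, hh⟩
    · refine ⟨fun f => ch f + (if f = e then 1 else 0), ?_, ?_⟩
      · intro f hf; simp only [hsupp f hf, if_neg (hes f hf)]; ring
      · intro v
        rw [dStar_add (G := G), hd v, dStar_delta (G := G), ht, hh]
        ring
    · refine ⟨fun f => ch f - (if f = e then 1 else 0), ?_, ?_⟩
      · intro f hf; simp only [hsupp f hf, if_neg (hes f hf)]; ring
      · intro v
        rw [dStar_sub (G := G), hd v, dStar_delta (G := G), ht, hh]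
        ring

lemma cut_sum (α : G.E → ℝ) (U : Finset G.V) :
    ∑ x ∈ U, G.dStar α x =
      ∑ e, α e * ((if G.head e ∈ U then (1 : ℝ) else 0) - (if G.tail e ∈ U then 1 else 0)) := by
  have h1 : ∀ g : G.E → G.V,
      ∑ x ∈ U, ∑ e ∈ Finset.univ.filter (fun e => g e = x), α e
        = ∑ e, if g e ∈ U then α e else 0 := by
    intro g
    simp_rw [Finset.sum_filter]
    rw [Finset.sum_comm]
    refine Finset.sum_congr rfl fun e _ => ?_
    exact Finset.sum_ite_eq U (g e) (fun _ => α e)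
  unfold dStar
  rw [Finset.sum_sub_distrib, h1, h1, ← Finset.sum_sub_distrib]
  refine Finset.sum_congr rfl fun e _ => ?_
  by_cases hh : G.head e ∈ U <;> by_cases ht : G.tail e ∈ U <;> simp [hh, ht]

lemma not_conn_erase {T : Finset G.E} (hT : G.IsSpanningTree T) {j : G.E} (hj : j ∈ T) :
    ¬ G.conn (T.erase j) (G.tail j) (G.head j) := by
  intro hc
  have hcon : G.ConnectedOn (T.erase j) := fun x y =>
    conn_replace (G := G) hc (le_refl _) (hT.1 x y)
  have h1 := card_le_of_connectedOn (G := G) hcon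
  have h2 := hT.2
  have hcard : (T.erase j).card + 1 = T.card := Finset.card_erase_add_one hj
  omega

lemma cycle_supported_eq_zero {T : Finset G.E} (hT : G.IsSpanningTree T)
    {α : G.E → ℝ} (hα : G.IsCycle α) (hsupp : ∀ f, f ∉ T → α f = 0) : ∀ j, α j = 0 := by
  intro j
  by_cases hj : j ∈ T
  swap
  · exact hsupp j hj
  set U : Finset G.V := Finset.univ.filter (fun x => G.conn (T.erase j) (G.tail j) x) with hU
  have hmemU : ∀ x, x ∈ U ↔ G.conn (T.erase j) (G.tail j) x := by
    intro x; rw [hU, Finset.mem_filter]; simp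
  have h0 : ∑ x ∈ U, G.dStar α x = 0 := Finset.sum_eq_zero (fun x _ => hα x)
  rw [cut_sum (G := G)] at h0
  have hht : G.head j ∉ U := fun hc => not_conn_erase (G := G) hT hj ((hmemU _).mp hc)
  have htt : G.tail j ∈ U := (hmemU _).mpr .refl
  rw [Finset.sum_eq_single j] at h0
  · rw [if_neg hht, if_pos htt] at h0; linarith
  · intro e _ hej
    by_cases heT : e ∈ T
    · have hee : e ∈ T.erase j := Finset.mem_erase.mpr ⟨hej, heT⟩
      have hiff : (G.head e ∈ U) ↔ (G.tail e ∈ U) := by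
        rw [hmemU, hmemU]
        exact ⟨fun h => h.tail ⟨e, hee, Or.inr ⟨rfl, rfl⟩⟩,
          fun h => h.tail ⟨e, hee, Or.inl ⟨rfl, rfl⟩⟩⟩
      by_cases hh : G.head e ∈ U
      · rw [if_pos hh, if_pos (hiff.mp hh)]; ring
      · rw [if_neg hh, if_neg (fun hcon => hh (hiff.mpr hcon))]; ring
    · rw [hsupp e heT]; ring
  · intro h; exact absurd (Finset.mem_univ j) h

lemma fundCycle_isCycle (T : Finset G.E) (e : G.E) : G.IsCycle (G.fundCycle T e) := by
  unfold fundCycle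
  split
  · next h => exact h.choose_spec.1
  · intro x; unfold dStar; simp

lemma fundCycle_exists {T : Finset G.E} (hconn : G.ConnectedOn T) {i : G.E} (hi : i ∉ T) :
    ∃ α : G.E → ℝ, G.IsCycle α ∧ α i = 1 ∧ ∀ f, f ∉ T → f ≠ i → α f = 0 := by
  obtain ⟨c, hsupp, hd⟩ := exists_chain (G := G) (hconn (G.head i) (G.tail i))
  refine ⟨fun f => (if f = i then 1 else 0) + c f, ?_, ?_, ?_⟩
  · intro v
    rw [dStar_add (G := G), dStar_delta (G := G), hd v]
    ring
  · simp [hsupp i hi]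
  · intro f hf hfi; simp only [hsupp f hf, if_neg hfi]; ring

lemma fundCycle_one {T : Finset G.E} (hconn : G.ConnectedOn T) {i : G.E} (hi : i ∉ T) :
    G.fundCycle T i i = 1 := by
  have h := fundCycle_exists (G := G) hconn hi
  unfold fundCycle
  rw [dif_pos h]
  exact h.choose_spec.2.1

lemma fundCycle_supp (T : Finset G.E) (i : G.E) {f : G.E} (hf : f ∉ T) (hfi : f ≠ i) :
    G.fundCycle T i f = 0 := by
  unfold fundCycle
  split
  · next h => exact h.choose_spec.2.2 f hf hfi
  · rfl

lemma fundCycle_mem {T : Finset G.E} (hT : G.IsSpanningTree T) {i : G.E} (hi : i ∈ T) :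
    G.fundCycle T i = fun _ => 0 := by
  unfold fundCycle
  split
  · next h =>
    exfalso
    obtain ⟨hc, h1, hs⟩ := h.choose_spec
    have := cycle_supported_eq_zero (G := G) hT hc
      (fun f hf => hs f hf (fun hfi => hf (hfi ▸ hi))) i
    rw [h1] at this
    exact one_ne_zero this
  · rfl

lemma fundCycle_unique {T : Finset G.E} (hT : G.IsSpanningTree T) {i : G.E} (hi : i ∉ T)
    {α : G.E → ℝ} (hα : G.IsCycle α) (h1 : α i = 1)
    (hsupp : ∀ f, f ∉ T → f ≠ i → α f = 0) :
    ∀ f, G.fundCycle T i f = α f := by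
  intro f
  have hd : G.IsCycle (fun f => G.fundCycle T i f - α f) := fun x => by
    rw [dStar_sub (G := G), fundCycle_isCycle (G := G) T i x, hα x]; ring
  have hz := cycle_supported_eq_zero (G := G) hT hd (fun f hf => by
    by_cases hfi : f = i
    · subst hfi
      rw [fundCycle_one (G := G) hT.1 hi, h1]; ring
    · rw [fundCycle_supp (G := G) T i hf hfi, hsupp f hf hfi]; ring) f
  have : G.fundCycle T i f - α f = 0 := hz
  linarith

lemma fundCycle_coeff {T : Finset G.E} (hT : G.IsSpanningTree T) {i j : G.E}
    (hi : i ∉ T) (hj : j ∈ T) :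
    G.fundCycle T i j =
      (if G.conn (T.erase j) (G.tail j) (G.head i) then (1 : ℝ) else 0)
        - (if G.conn (T.erase j) (G.tail j) (G.tail i) then 1 else 0) := by
  have hij : i ≠ j := fun h => hi (h ▸ hj)
  set α := G.fundCycle T i with hα
  set U : Finset G.V := Finset.univ.filter (fun x => G.conn (T.erase j) (G.tail j) x) with hU
  have hmemU : ∀ x, x ∈ U ↔ G.conn (T.erase j) (G.tail j) x := by
    intro x; rw [hU, Finset.mem_filter]; simp
  have h0 : ∑ x ∈ U, G.dStar α x = 0 :=
    Finset.sum_eq_zero (fun x _ => fundCycle_isCycle (G := G) T i x)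
  rw [cut_sum (G := G)] at h0
  have hht : G.head j ∉ U := fun hc => not_conn_erase (G := G) hT hj ((hmemU _).mp hc)
  have htt : G.tail j ∈ U := (hmemU _).mpr .refl
  have hiu : i ∈ Finset.univ.erase j := Finset.mem_erase.mpr ⟨hij, Finset.mem_univ i⟩
  rw [← Finset.add_sum_erase _ _ (Finset.mem_univ j), ← Finset.add_sum_erase _ _ hiu] at h0
  have hrest : ∑ e ∈ (Finset.univ.erase j).erase i,
      α e * ((if G.head e ∈ U then (1 : ℝ) else 0) - (if G.tail e ∈ U then 1 else 0)) = 0 := by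
    refine Finset.sum_eq_zero fun e he => ?_
    obtain ⟨hei, hej, _⟩ : e ≠ i ∧ e ≠ j ∧ True := by
      rcases Finset.mem_erase.mp he with ⟨hei, he2⟩
      exact ⟨hei, (Finset.mem_erase.mp he2).1, trivial⟩
    by_cases heT : e ∈ T
    · have hee : e ∈ T.erase j := Finset.mem_erase.mpr ⟨hej, heT⟩
      have hiff : (G.head e ∈ U) ↔ (G.tail e ∈ U) := by
        rw [hmemU, hmemU]
        exact ⟨fun h => h.tail ⟨e, hee, Or.inr ⟨rfl, rfl⟩⟩,
          fun h => h.tail ⟨e, hee, Or.inl ⟨rfl, rfl⟩⟩⟩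
      by_cases hh : G.head e ∈ U
      · rw [if_pos hh, if_pos (hiff.mp hh)]; ring
      · rw [if_neg hh, if_neg (fun hcon => hh (hiff.mpr hcon))]; ring
    · rw [hα, fundCycle_supp (G := G) T i heT hei]; ring
  rw [hrest, if_neg hht, if_pos htt] at h0
  have h1 : α i = 1 := fundCycle_one (G := G) hT.1 hi
  rw [h1] at h0
  have hgoal : α j = (if G.head i ∈ U then (1 : ℝ) else 0) - (if G.tail i ∈ U then 1 else 0) := by
    linarith
  rw [hgoal]
  simp only [hU, Finset.mem_filter, Finset.mem_univ, true_and]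
lemma fundCycle_sq {T : Finset G.E} (hT : G.IsSpanningTree T) {i j : G.E}
    (hi : i ∉ T) (hj : j ∈ T) (hne : G.fundCycle T i j ≠ 0) :
    G.fundCycle T i j * G.fundCycle T i j = 1 := by
  rw [fundCycle_coeff (G := G) hT hi hj] at hne ⊢
  by_cases h1 : G.conn (T.erase j) (G.tail j) (G.head i) <;>
    by_cases h2 : G.conn (T.erase j) (G.tail j) (G.tail i) <;>
    simp [h1, h2] at hne ⊢

lemma cycle_decomp {T : Finset G.E} (hT : G.IsSpanningTree T) {c : G.E → ℝ}
    (hc : G.IsCycle c) (i : G.E) :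
    ∑ j, c j * G.fundCycle T j i = c i := by
  set δ : G.E → ℝ := fun f => c f - ∑ j, c j * G.fundCycle T j f with hδ
  have hcyc : G.IsCycle δ := by
    intro x
    rw [hδ]
    rw [dStar_sub (G := G), dStar_fsum (G := G), hc x]
    have hz : ∀ j : G.E, G.dStar (fun f => c j * G.fundCycle T j f) x = 0 := fun j => by
      rw [dStar_mul (G := G), fundCycle_isCycle (G := G) T j x]; ring
    rw [Finset.sum_congr rfl (fun j _ => hz j)]
    simp
  have hsupp : ∀ f, f ∉ T → δ f = 0 := by
    intro f hf
    rw [hδ]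
    simp only []
    rw [Finset.sum_eq_single f]
    · rw [fundCycle_one (G := G) hT.1 hf]; ring
    · intro k _ hkf
      by_cases hkT : k ∈ T
      · rw [fundCycle_mem (G := G) hT hkT]; ring
      · rw [fundCycle_supp (G := G) T k hf (Ne.symm hkf)]; ring
    · exact fun h => absurd (Finset.mem_univ f) h
  have hz := cycle_supported_eq_zero (G := G) hT hcyc hsupp i
  rw [hδ] at hz
  simp only [] at hz
  linarith

lemma anchor {T : Finset G.E} (hconn : G.ConnectedOn T) {j : G.E} (x : G.V) :
    G.conn (T.erase j) (G.tail j) x ∨ G.conn (T.erase j) (G.head j) x := by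
  rcases conn_erase_cases (G := G) (e := j) (hconn (G.tail j) x) with h | ⟨_, h⟩ | ⟨_, h⟩
  · exact Or.inl h
  · exact Or.inr h
  · exact Or.inl h

lemma swap_spanning {T : Finset G.E} (hT : G.IsSpanningTree T) {i j : G.E}
    (hi : i ∉ T) (hj : j ∈ T) (hne : G.fundCycle T i j ≠ 0) :
    G.IsSpanningTree (insert i (T.erase j)) := by
  have hcoeff := fundCycle_coeff (G := G) hT hi hj
  rw [hcoeff] at hne
  have hsubT' : T.erase j ⊆ insert i (T.erase j) := Finset.subset_insert i _
  have hstepi : G.srel (insert i (T.erase j)) (G.tail i) (G.head i) :=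
    ⟨i, Finset.mem_insert_self i _, Or.inl ⟨rfl, rfl⟩⟩
  have hstep : G.conn (insert i (T.erase j)) (G.tail j) (G.head j) := by
    by_cases h1 : G.conn (T.erase j) (G.tail j) (G.head i) <;>
      by_cases h2 : G.conn (T.erase j) (G.tail j) (G.tail i)
    · simp [h1, h2] at hne
    · -- head i on tail-j side, tail i on head-j side
      have h3 : G.conn (T.erase j) (G.head j) (G.tail i) := by
        rcases anchor (G := G) hT.1 (j := j) (G.tail i) with h | h
        · exact absurd h h2
        · exact h
      refine Relation.ReflTransGen.trans (conn_mono hsubT' h1) ?_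
      refine Relation.ReflTransGen.trans (Relation.ReflTransGen.single (srel_symm hstepi)) ?_
      exact conn_symm (conn_mono hsubT' h3)
    · -- tail i on tail-j side, head i on head-j side
      have h3 : G.conn (T.erase j) (G.head j) (G.head i) := by
        rcases anchor (G := G) hT.1 (j := j) (G.head i) with h | h
        · exact absurd h h1
        · exact h
      refine Relation.ReflTransGen.trans (conn_mono hsubT' h2) ?_
      refine Relation.ReflTransGen.trans (Relation.ReflTransGen.single hstepi) ?_
      exact conn_symm (conn_mono hsubT' h3)
    · simp [h1, h2] at hne
  constructor
  · exact fun x y => conn_replace (G := G) hstep hsubT' (hT.1 x y)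
  · have hinotm : i ∉ T.erase j := fun h => hi (Finset.mem_of_mem_erase h)
    have hc1 : (insert i (T.erase j)).card = (T.erase j).card + 1 :=
      Finset.card_insert_of_notMem hinotm
    have hc2 : (T.erase j).card + 1 = T.card := Finset.card_erase_add_one hj
    have := hT.2
    omega

lemma swap_fundCycle {T : Finset G.E} (hT : G.IsSpanningTree T) {i j : G.E}
    (hi : i ∉ T) (hj : j ∈ T) (hij : i ≠ j) (hne : G.fundCycle T i j ≠ 0) :
    ∀ f, G.fundCycle (insert i (T.erase j)) j f
      = (G.fundCycle T i j)⁻¹ * G.fundCycle T i f := by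
  have hT' := swap_spanning (G := G) hT hi hj hne
  have hjT' : j ∉ insert i (T.erase j) := by
    intro h
    rcases Finset.mem_insert.mp h with h | h
    · exact hij (h.symm)
    · exact (Finset.mem_erase.mp h).1 rfl
  have := fundCycle_unique (G := G) hT' hjT'
    (α := fun f => (G.fundCycle T i j)⁻¹ * G.fundCycle T i f)
    (fun x => by rw [dStar_mul (G := G), fundCycle_isCycle (G := G) T i x]; ring)
    (by beta_reduce; rw [inv_mul_cancel₀ hne])
    (fun f hf hfj => by
      have hfi : f ≠ i := fun h => hf (by rw [h]; exact Finset.mem_insert_self i _)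
      have hfT : f ∉ T := fun hfT =>
        hf (Finset.mem_insert_of_mem (Finset.mem_erase.mpr ⟨hfj, hfT⟩))
      beta_reduce
      rw [fundCycle_supp (G := G) T i hfT hfi]; ring)
  exact this

lemma swap_wt {T : Finset G.E} {i j : G.E} (hi : i ∉ T) (hj : j ∈ T) (hij : i ≠ j) :
    G.wt (insert i (T.erase j)) * G.len i = G.wt T * G.len j := by
  unfold wt
  have hcompl : Finset.univ \ insert i (T.erase j) = insert j ((Finset.univ \ T).erase i) := by
    ext e
    constructor
    · intro he
      obtain ⟨-, hnot⟩ := Finset.mem_sdiff.mp he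
      rw [Finset.mem_insert]
      by_cases hej : e = j
      · exact Or.inl hej
      · refine Or.inr (Finset.mem_erase.mpr ⟨?_, Finset.mem_sdiff.mpr ⟨Finset.mem_univ e, ?_⟩⟩)
        · intro hei; exact hnot (by rw [hei]; exact Finset.mem_insert_self i _)
        · intro heT; exact hnot (Finset.mem_insert_of_mem (Finset.mem_erase.mpr ⟨hej, heT⟩))
    · intro he
      rcases Finset.mem_insert.mp he with rfl | he2
      · refine Finset.mem_sdiff.mpr ⟨Finset.mem_univ _, ?_⟩
        intro hc
        rcases Finset.mem_insert.mp hc with h | h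
        · exact hij h.symm
        · exact (Finset.mem_erase.mp h).1 rfl
      · obtain ⟨hei, he3⟩ := Finset.mem_erase.mp he2
        obtain ⟨-, heT⟩ := Finset.mem_sdiff.mp he3
        refine Finset.mem_sdiff.mpr ⟨Finset.mem_univ _, ?_⟩
        intro hc
        rcases Finset.mem_insert.mp hc with h | h
        · exact hei h
        · exact heT (Finset.mem_of_mem_erase h)
  rw [hcompl]
  have hjni : j ∉ (Finset.univ \ T).erase i := fun h =>
    (Finset.mem_sdiff.mp (Finset.mem_of_mem_erase h)).2 hj
  have hiu : i ∈ Finset.univ \ T := Finset.mem_sdiff.mpr ⟨Finset.mem_univ i, hi⟩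
  rw [Finset.prod_insert hjni, ← Finset.mul_prod_erase (Finset.univ \ T) G.len hiu]
  ring

lemma swap_package {i j : G.E} (hij : i ≠ j) {T : Finset G.E}
    (hT : G.IsSpanningTree T) (hne : G.fundCycle T i j ≠ 0) :
    (G.IsSpanningTree (insert i (T.erase j)) ∧
      G.fundCycle (insert i (T.erase j)) j i ≠ 0) ∧
    insert j ((insert i (T.erase j)).erase i) = T ∧
    G.wt T * G.fundCycle T i j * G.len j =
      G.wt (insert i (T.erase j)) * G.fundCycle (insert i (T.erase j)) j i * G.len i := by
  have hi : i ∉ T := by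
    intro hiT
    rw [fundCycle_mem (G := G) hT hiT] at hne
    exact hne rfl
  have hj : j ∈ T := by
    by_contra hjT
    rw [fundCycle_supp (G := G) T i hjT (Ne.symm hij)] at hne
    exact hne rfl
  have hT' := swap_spanning (G := G) hT hi hj hne
  have hfc := swap_fundCycle (G := G) hT hi hj hij hne
  have hfci : G.fundCycle (insert i (T.erase j)) j i = (G.fundCycle T i j)⁻¹ := by
    rw [hfc i, fundCycle_one (G := G) hT.1 hi, mul_one]
  have hinotm : i ∉ T.erase j := fun h => hi (Finset.mem_of_mem_erase h)
  have hback : insert j ((insert i (T.erase j)).erase i) = T := by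
    rw [Finset.erase_insert hinotm, Finset.insert_erase hj]
  have hsq := fundCycle_sq (G := G) hT hi hj hne
  have hw := swap_wt (G := G) hi hj hij
  refine ⟨⟨hT', by rw [hfci]; exact inv_ne_zero hne⟩, hback, ?_⟩
  rw [hfci]
  have hinv : (G.fundCycle T i j)⁻¹ = G.fundCycle T i j := by
    field_simp
    nlinarith [hsq]
  rw [hinv]
  calc G.wt T * G.fundCycle T i j * G.len j
      = (G.wt T * G.len j) * G.fundCycle T i j := by ring
    _ = (G.wt (insert i (T.erase j)) * G.len i) * G.fundCycle T i j := by rw [hw]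
    _ = G.wt (insert i (T.erase j)) * G.fundCycle T i j * G.len i := by ring

lemma sum_symm (i j : G.E) :
    (∑ T : Finset G.E, if G.IsSpanningTree T then G.wt T * G.fundCycle T i j else 0) * G.len j =
    (∑ T : Finset G.E, if G.IsSpanningTree T then G.wt T * G.fundCycle T j i else 0) * G.len i := by
  by_cases hij : i = j
  · subst hij; rfl
  have key : ∀ a b : G.E,
      (∑ T : Finset G.E, if G.IsSpanningTree T then G.wt T * G.fundCycle T a b else 0) * G.len b =
      ∑ T ∈ Finset.univ.filter (fun T => G.IsSpanningTree T ∧ G.fundCycle T a b ≠ 0),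
        G.wt T * G.fundCycle T a b * G.len b := by
    intro a b
    rw [Finset.sum_mul]
    simp_rw [ite_mul, zero_mul]
    rw [← Finset.sum_filter]
    refine (Finset.sum_subset ?_ ?_).symm
    · intro T hTmem
      rw [Finset.mem_filter] at hTmem ⊢
      exact ⟨hTmem.1, hTmem.2.1⟩
    · intro T hTmem hTnot
      rw [Finset.mem_filter] at hTmem hTnot
      have : G.fundCycle T a b = 0 := by
        by_contra hcon
        exact hTnot ⟨hTmem.1, hTmem.2, hcon⟩
      rw [this]; ring
  rw [key i j, key j i]
  refine Finset.sum_nbij' (fun T => insert i (T.erase j)) (fun T => insert j (T.erase i))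
    ?_ ?_ ?_ ?_ ?_
  · intro T hTmem
    rw [Finset.mem_filter] at hTmem ⊢
    obtain ⟨⟨h1, h2⟩, _, _⟩ := swap_package (G := G) hij hTmem.2.1 hTmem.2.2
    exact ⟨Finset.mem_univ _, h1, h2⟩
  · intro T hTmem
    rw [Finset.mem_filter] at hTmem ⊢
    obtain ⟨⟨h1, h2⟩, _, _⟩ := swap_package (G := G) (Ne.symm hij) hTmem.2.1 hTmem.2.2
    exact ⟨Finset.mem_univ _, h1, h2⟩
  · intro T hTmem
    rw [Finset.mem_filter] at hTmem
    obtain ⟨_, hback, _⟩ := swap_package (G := G) hij hTmem.2.1 hTmem.2.2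
    exact hback
  · intro T hTmem
    rw [Finset.mem_filter] at hTmem
    obtain ⟨_, hback, _⟩ := swap_package (G := G) (Ne.symm hij) hTmem.2.1 hTmem.2.2
    exact hback
  · intro T hTmem
    rw [Finset.mem_filter] at hTmem
    obtain ⟨_, _, hterm⟩ := swap_package (G := G) hij hTmem.2.1 hTmem.2.2
    exact hterm

lemma key_identity (hG : G.Connected) (i : G.E) {c : G.E → ℝ} (hc : G.IsCycle c) :
    ∑ j, (∑ T : Finset G.E, if G.IsSpanningTree T then G.wt T * G.fundCycle T i j else 0)
        * (c j * G.len j)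
      = G.wG * (c i * G.len i) := by
  have step1 : ∀ j : G.E,
      (∑ T : Finset G.E, if G.IsSpanningTree T then G.wt T * G.fundCycle T i j else 0)
          * (c j * G.len j)
      = ((∑ T : Finset G.E, if G.IsSpanningTree T then G.wt T * G.fundCycle T j i else 0)
          * G.len i) * c j := by
    intro j
    rw [show (∑ T : Finset G.E, if G.IsSpanningTree T then G.wt T * G.fundCycle T i j else 0)
          * (c j * G.len j)
        = ((∑ T : Finset G.E, if G.IsSpanningTree T then G.wt T * G.fundCycle T i j else 0)
          * G.len j) * c j by ring, sum_symm (G := G) i j]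
  rw [Finset.sum_congr rfl (fun j _ => step1 j)]
  have step2 : ∑ j : G.E,
      ((∑ T : Finset G.E, if G.IsSpanningTree T then G.wt T * G.fundCycle T j i else 0)
        * G.len i) * c j
      = ∑ j : G.E, ∑ T : Finset G.E,
          G.len i * (if G.IsSpanningTree T then G.wt T * G.fundCycle T j i * c j else 0) := by
    refine Finset.sum_congr rfl fun j _ => ?_
    rw [Finset.sum_mul, Finset.sum_mul]
    refine Finset.sum_congr rfl fun T _ => ?_
    by_cases h : G.IsSpanningTree T <;> simp [h] <;> ring
  rw [step2, Finset.sum_comm]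
  have step3 : ∀ T : Finset G.E,
      ∑ j : G.E, G.len i * (if G.IsSpanningTree T then G.wt T * G.fundCycle T j i * c j else 0)
      = G.len i * ((if G.IsSpanningTree T then G.wt T else 0) * c i) := by
    intro T
    rw [← Finset.mul_sum]
    congr 1
    by_cases h : G.IsSpanningTree T
    · simp only [if_pos h]
      have hr : ∀ j : G.E, G.wt T * G.fundCycle T j i * c j
          = G.wt T * (c j * G.fundCycle T j i) := fun j => by ring
      rw [Finset.sum_congr rfl (fun j _ => hr j), ← Finset.mul_sum,
        cycle_decomp (G := G) h hc i]
    · simp [h]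
  rw [Finset.sum_congr rfl (fun T _ => step3 T), ← Finset.mul_sum, ← Finset.sum_mul]
  unfold wG
  ring
end WGraph

open scoped Classical in
/-- **Kirchhoff.** The orthogonal projection
`π : C₁(G,ℝ) → H₁(G,ℝ)` (characterized by: `π(δ_i)` is a cycle and
`δ_i - π(δ_i)` is orthogonal to all cycles) is given on the basis 1-chain `δ_i`
by averaging fundamental cycles over spanning trees:
`π(δ_i)(j) = (1/w(G)) Σ_T α_{T,i}(j) w(T)`. -/
theorem projection_via_spanning_trees (G : WGraph) (hG : G.Connected) (i : G.E)
    (β : G.E → ℝ) (hcyc : G.IsCycle β)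
    (horth : ∀ γ : G.E → ℝ, G.IsCycle γ →
      G.ip (fun j => (if j = i then (1 : ℝ) else 0) - β j) γ = 0) :
    ∀ j : G.E, β j = (1 / G.wG) *
      ∑ T : Finset G.E,
        if G.IsSpanningTree T then G.fundCycle T i j * G.wt T else 0 := by
  intro j
  haveI hne : Nonempty G.V := ⟨G.tail j⟩
  obtain ⟨T₀, hT₀⟩ := WGraph.exists_spanning_tree (G := G) hG
  have hwt_nonneg : ∀ T : Finset G.E, 0 ≤ G.wt T := fun T =>
    Finset.prod_nonneg fun e _ => (G.len_pos e).le
  have hwG : 0 < G.wG := by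
    unfold WGraph.wG
    refine Finset.sum_pos' (fun T _ => ?_) ⟨T₀, Finset.mem_univ _, ?_⟩
    · by_cases h : G.IsSpanningTree T
      · rw [if_pos h]; exact hwt_nonneg T
      · rw [if_neg h]
    · rw [if_pos hT₀]
      exact Finset.prod_pos fun e _ => G.len_pos e
  set γ : G.E → ℝ := fun k => (1 / G.wG) *
      ∑ T : Finset G.E, if G.IsSpanningTree T then G.wt T * G.fundCycle T i k else 0 with hγdef
  have hγcyc : G.IsCycle γ := by
    intro x
    have hrw : γ = fun k => (1 / G.wG) * ∑ T : Finset G.E,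
        (if G.IsSpanningTree T then G.wt T else 0) * G.fundCycle T i k := by
      funext k
      simp only [hγdef]
      congr 1
      refine Finset.sum_congr rfl fun T _ => ?_
      by_cases h : G.IsSpanningTree T <;> simp [h]
    rw [hrw]
    rw [WGraph.dStar_mul (G := G) (1 / G.wG)
      (fun k => ∑ T : Finset G.E, (if G.IsSpanningTree T then G.wt T else 0) * G.fundCycle T i k) x]
    rw [WGraph.dStar_fsum (G := G) Finset.univ
      (fun T k => (if G.IsSpanningTree T then G.wt T else 0) * G.fundCycle T i k) x]
    have hz : ∀ T : Finset G.E, G.dStar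
        (fun k => (if G.IsSpanningTree T then G.wt T else 0) * G.fundCycle T i k) x = 0 :=
      fun T => by
        rw [WGraph.dStar_mul (G := G), WGraph.fundCycle_isCycle (G := G) T i x]; ring
    rw [Finset.sum_congr rfl (fun T _ => hz T)]
    simp
  have hipγ : ∀ c : G.E → ℝ, G.IsCycle c → G.ip γ c = c i * G.len i := by
    intro c hc
    unfold WGraph.ip
    have hterm : ∀ k : G.E, γ k * c k * G.len k =
        ((∑ T : Finset G.E, if G.IsSpanningTree T then G.wt T * G.fundCycle T i k else 0)
          * (c k * G.len k)) * (1 / G.wG) := by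
      intro k
      simp only [hγdef]
      ring
    rw [Finset.sum_congr rfl (fun k _ => hterm k), ← Finset.sum_mul,
      WGraph.key_identity (G := G) hG i hc]
    field_simp
  set c : G.E → ℝ := fun k => β k - γ k with hcdef
  have hccyc : G.IsCycle c := by
    intro x
    simp only [hcdef]; rw [WGraph.dStar_sub (G := G), hcyc x, hγcyc x]
    ring
  have e1 : G.ip (fun k => (if k = i then (1 : ℝ) else 0) - β k) c = 0 := horth c hccyc
  have e2 : G.ip γ c = c i * G.len i := hipγ c hccyc
  have e3 : G.ip (fun k => if k = i then (1 : ℝ) else 0) c = c i * G.len i := by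
    unfold WGraph.ip
    rw [Finset.sum_eq_single i]
    · simp
    · intro k _ hki
      simp [hki]
    · intro h; exact absurd (Finset.mem_univ i) h
  have e4 : G.ip (fun k => (if k = i then (1 : ℝ) else 0) - β k) c
      = G.ip (fun k => if k = i then (1 : ℝ) else 0) c - G.ip β c := by
    unfold WGraph.ip
    rw [← Finset.sum_sub_distrib]
    refine Finset.sum_congr rfl fun k _ => ?_
    ring
  have e5 : G.ip β c - G.ip γ c = G.ip c c := by
    unfold WGraph.ip
    rw [← Finset.sum_sub_distrib]
    refine Finset.sum_congr rfl fun k _ => ?_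
    simp only [hcdef]
    ring
  have e6 : G.ip c c = 0 := by
    rw [← e5]
    have : G.ip β c = c i * G.len i := by
      rw [e4] at e1
      rw [e3] at e1
      linarith
    rw [this, e2]
    ring
  have e7 : c j = 0 := by
    unfold WGraph.ip at e6
    have hnn : ∀ k ∈ Finset.univ (α := G.E), 0 ≤ c k * c k * G.len k := fun k _ =>
      mul_nonneg (mul_self_nonneg (c k)) (G.len_pos k).le
    have := (Finset.sum_eq_zero_iff_of_nonneg hnn).mp e6 j (Finset.mem_univ j)
    have hlen := G.len_pos j
    rcases mul_eq_zero.mp this with h | h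
    · exact mul_self_eq_zero.mp h
    · exact absurd h (ne_of_gt hlen)
  have hβγ : β j = γ j := by
    have : β j - γ j = 0 := e7
    linarith
  rw [hβγ]
  simp only [hγdef]
  congr 1
  refine Finset.sum_congr rfl fun T _ => ?_
  by_cases h : G.IsSpanningTree T
  · rw [if_pos h, if_pos h, mul_comm]
  · rw [if_neg h, if_neg h]
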